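/- Let Ω be a domain in a metric space X, z₀ ∈ Ω, c ≥ 1, and let γ: [0,L] → Ω̄ be a curve, parametrized by arclength with γ(L) = z₀, satisfying ℓ(γ restricted to [0,s]) ≤ c · dist(γ(s), X∖Ω) for all s ∈ (0,L] (a c-John curve with respect to Ω ending at z₀). Define the 'carrot' C[γ] = ⋃_{s∈(0,L]} B(γ(s), dist(γ(s), X∖Ω)). Assume X is geodesic. Then C[γ] is an (8M+1)-John domain with John center z₀ whenever c ≤ 4M; in particular, if c = 4M, then C[γ] is (8M+1)-John with center z₀. -/

import Mathlib

open Metric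
open scoped ENNReal

/-- `X` is a geodesic space. -/
def GeodesicSpace' (X : Type*) [MetricSpace X] : Prop :=
  ∀ x y : X, ∃ γ : ℝ → X, γ 0 = x ∧ γ (dist x y) = y ∧
    ∀ s ∈ Set.Icc (0 : ℝ) (dist x y), ∀ t ∈ Set.Icc (0 : ℝ) (dist x y),
      dist (γ s) (γ t) = |s - t|

/-- `U` is a `c`-John domain with John center `z₀`. -/
def IsJohnDomain {X : Type*} [MetricSpace X] (U : Set X) (c : ℝ) (z₀ : X) : Prop :=
  ∀ y ∈ U, y ≠ z₀ → ∃ (L : ℝ) (γ : ℝ → X), 0 ≤ L ∧ γ 0 = y ∧ γ L = z₀ ∧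
    LipschitzOnWith 1 γ (Set.Icc 0 L) ∧
    ∀ s ∈ Set.Icc (0 : ℝ) L,
      γ s ∈ U ∧ ENNReal.ofReal s ≤ ENNReal.ofReal c * EMetric.infEdist (γ s) Uᶜ

/-- If a ball around `x` is contained in `A`, then the radius bounds `infEdist x Aᶜ` below. -/
lemma ball_subset_le_infEdist {X : Type*} [MetricSpace X] {A : Set X} {x : X} {r : ℝ}
    (h : Metric.ball x r ⊆ A) : ENNReal.ofReal r ≤ EMetric.infEdist x Aᶜ := by
  show _ ≤ Metric.infEDist x Aᶜ
  rw [EMetric.le_infEdist]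
  intro w hw
  rw [edist_dist]
  refine ENNReal.ofReal_le_ofReal ?_
  by_contra hlt
  exact hw (h (Metric.mem_ball.mpr (by rw [dist_comm]; exact lt_of_not_ge hlt)))

/-- The "carrot" `C[γ] = ⋃_{s ∈ (0,L]} B(γ s, dist(γ s, X∖Ω))` over a `c`-John curve `γ`
(parametrized by arclength, ending at `z₀ ∈ Ω`, with values in `Ω̄`) is an `(8M+1)`-John
domain with John center `z₀`, whenever `c ≤ 4M`. -/
theorem carrot_isJohnDomain {X : Type*} [MetricSpace X] (hgeo : GeodesicSpace' X)
    (Ω : Set X) (hΩo : IsOpen Ω) (hΩc : IsConnected Ω) (z₀ : X) (hz₀ : z₀ ∈ Ω)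
    (c L : ℝ) (hc : 1 ≤ c) (hL : 0 ≤ L)
    (γ : ℝ → X) (hγL : γ L = z₀)
    (harc : LipschitzOnWith 1 γ (Set.Icc 0 L))
    (hγcl : ∀ s ∈ Set.Icc (0 : ℝ) L, γ s ∈ closure Ω)
    (hJohn : ∀ s ∈ Set.Ioc (0 : ℝ) L, s ≤ c * Metric.infDist (γ s) Ωᶜ) :
    ∀ M : ℝ, 0 < M → c ≤ 4 * M →
      IsJohnDomain (⋃ s ∈ Set.Ioc (0 : ℝ) L,
        Metric.ball (γ s) (Metric.infDist (γ s) Ωᶜ)) (8 * M + 1) z₀ := by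
  intro M hM hcM y hy hyne
  set C := ⋃ s ∈ Set.Ioc (0 : ℝ) L, Metric.ball (γ s) (Metric.infDist (γ s) Ωᶜ) with hCdef
  have hc0 : (0 : ℝ) < c := lt_of_lt_of_le one_pos hc
  -- distance bound for γ
  have hγd : ∀ a ∈ Set.Icc (0:ℝ) L, ∀ b ∈ Set.Icc (0:ℝ) L, dist (γ a) (γ b) ≤ |a - b| := by
    intro a ha b hb
    have := harc.dist_le_mul a ha b hb
    simpa [Real.dist_eq] using this
  simp only [hCdef, Set.mem_iUnion, exists_prop] at hy
  obtain ⟨s₀, hs₀, hyb⟩ := hy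
  obtain ⟨g, hg0, hgd, hgiso⟩ := hgeo y (γ s₀)
  set d := dist y (γ s₀) with hdd
  set r₀ := Metric.infDist (γ s₀) Ωᶜ with hr₀
  have hd : d < r₀ := Metric.mem_ball.mp hyb
  have hd0 : (0 : ℝ) ≤ d := dist_nonneg
  set Λ := d + (L - s₀) with hΛdef
  have hΛd : d ≤ Λ := by have := hs₀.2; simp [hΛdef]; linarith
  have hΛ0 : (0 : ℝ) ≤ Λ := le_trans hd0 hΛd
  set α : ℝ → X := fun t => if t ≤ d then g t else γ (s₀ + (t - d)) with hαdef
  -- the ball around γ s₀ is in C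
  have hball₀ : Metric.ball (γ s₀) r₀ ⊆ C := by
    rw [hCdef]
    exact Set.subset_biUnion_of_mem (u := fun s => Metric.ball (γ s) (Metric.infDist (γ s) Ωᶜ)) hs₀
  -- for t in [d, Λ], the parameter s₀ + (t - d) lies in (0, L]
  have hparam : ∀ t, d ≤ t → t ≤ Λ → s₀ + (t - d) ∈ Set.Ioc (0 : ℝ) L := by
    intro t h1 h2
    constructor
    · have := hs₀.1; linarith
    · simp only [hΛdef] at h2; linarith
  -- geodesic distances
  have hgdist : ∀ t ∈ Set.Icc (0:ℝ) d, dist (g t) (γ s₀) = d - t := by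
    intro t ht
    have := hgiso t ht d ⟨hd0, le_refl d⟩
    rw [hgd] at this
    rw [this, abs_of_nonpos (by linarith [ht.2])]
    ring
  refine ⟨Λ, α, hΛ0, ?_, ?_, ?_, ?_⟩
  · -- α 0 = y
    simp only [hαdef, if_pos hd0, hg0]
  · -- α Λ = z₀
    by_cases h : Λ ≤ d
    · have hLs : L = s₀ := by simp only [hΛdef] at h; linarith [hs₀.2]
      have hΛed : Λ = d := by rw [hΛdef, hLs]; ring
      simp only [hαdef]
      rw [hΛed, if_pos le_rfl, hgd, ← hLs, hγL]
    · simp only [hαdef]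
      rw [if_neg h]
      have he : s₀ + (Λ - d) = L := by rw [hΛdef]; ring
      rw [he, hγL]
  · -- Lipschitz
    rw [lipschitzOnWith_iff_dist_le_mul]
    have key : ∀ u ∈ Set.Icc 0 Λ, ∀ v ∈ Set.Icc 0 Λ, u ≤ v → dist (α u) (α v) ≤ v - u := by
      intro u hu v hv huv
      by_cases hvd : v ≤ d
      · have hud : u ≤ d := le_trans huv hvd
        simp only [hαdef]
        rw [if_pos hvd, if_pos hud]
        have := hgiso u ⟨hu.1, hud⟩ v ⟨hv.1, hvd⟩
        rw [this, abs_of_nonpos (by linarith)]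
        linarith
      · push_neg at hvd
        have hsv : s₀ + (v - d) ∈ Set.Icc (0:ℝ) L := by
          have := hparam v hvd.le hv.2
          exact ⟨this.1.le, this.2⟩
        by_cases hud : u ≤ d
        · -- u on geodesic, v on γ
          simp only [hαdef]
          rw [if_pos hud, if_neg (not_le.mpr hvd)]
          have h1 : dist (g u) (γ s₀) = d - u := hgdist u ⟨hu.1, hud⟩
          have h2 : dist (γ s₀) (γ (s₀ + (v - d))) ≤ v - d := by
            have := hγd s₀ ⟨hs₀.1.le, hs₀.2⟩ (s₀ + (v - d)) hsv
            calc dist (γ s₀) (γ (s₀ + (v - d))) ≤ |s₀ - (s₀ + (v - d))| := this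
              _ = v - d := by rw [abs_of_nonpos (by linarith)]; ring
          calc dist (g u) (γ (s₀ + (v - d)))
              ≤ dist (g u) (γ s₀) + dist (γ s₀) (γ (s₀ + (v - d))) := dist_triangle _ _ _
            _ ≤ (d - u) + (v - d) := by rw [h1]; linarith
            _ = v - u := by ring
        · push_neg at hud
          simp only [hαdef]
          rw [if_neg (not_le.mpr hud), if_neg (not_le.mpr hvd)]
          have hsu : s₀ + (u - d) ∈ Set.Icc (0:ℝ) L := by
            have := hparam u hud.le hu.2
            exact ⟨this.1.le, this.2⟩
          calc dist (γ (s₀ + (u - d))) (γ (s₀ + (v - d)))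
              ≤ |s₀ + (u - d) - (s₀ + (v - d))| := hγd _ hsu _ hsv
            _ = v - u := by rw [abs_of_nonpos (by linarith)]; ring
    intro x hx y' hy'
    rw [NNReal.coe_one, one_mul]
    rcases le_total x y' with h | h
    · have := key x hx y' hy' h
      rw [Real.dist_eq, abs_of_nonpos (by linarith)]
      linarith
    · have := key y' hy' x hx h
      rw [dist_comm (α x), Real.dist_eq, abs_of_nonneg (by linarith)] at *
      linarith
  · -- membership + John condition
    intro t ht
    have hM81 : (0:ℝ) ≤ 8 * M + 1 := by linarith
    by_cases hcase : t ≤ d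
    · -- geodesic part
      simp only [hαdef]
      rw [if_pos hcase]
      have hgt : dist (g t) (γ s₀) = d - t := hgdist t ⟨ht.1, hcase⟩
      constructor
      · exact hball₀ (Metric.mem_ball.mpr (by rw [hgt]; linarith [ht.1]))
      · have hsub : Metric.ball (g t) (r₀ - (d - t)) ⊆ C := by
          refine Set.Subset.trans (Metric.ball_subset_ball' ?_) hball₀
          rw [hgt]; linarith
        have hlow := ball_subset_le_infEdist hsub
        calc ENNReal.ofReal t
            ≤ ENNReal.ofReal ((8 * M + 1) * (r₀ - (d - t))) := by
              refine ENNReal.ofReal_le_ofReal ?_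
              nlinarith [ht.1]
          _ = ENNReal.ofReal (8 * M + 1) * ENNReal.ofReal (r₀ - (d - t)) :=
              ENNReal.ofReal_mul hM81
          _ ≤ ENNReal.ofReal (8 * M + 1) * EMetric.infEdist (g t) Cᶜ :=
              mul_le_mul_right hlow _
    · -- γ part
      push_neg at hcase
      simp only [hαdef]
      rw [if_neg (not_le.mpr hcase)]
      set s := s₀ + (t - d) with hsdef
      have hs : s ∈ Set.Ioc (0:ℝ) L := hparam t hcase.le ht.2
      set ρ := Metric.infDist (γ s) Ωᶜ with hρdef
      have hJ : s ≤ c * ρ := hJohn s hs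
      have hρ0 : (0:ℝ) ≤ ρ := Metric.infDist_nonneg
      have hρpos : 0 < ρ := by nlinarith [hs.1]
      have hballs : Metric.ball (γ s) ρ ⊆ C := by
          rw [hCdef]
          exact Set.subset_biUnion_of_mem (u := fun s => Metric.ball (γ s) (Metric.infDist (γ s) Ωᶜ)) hs
      constructor
      · exact hballs (Metric.mem_ball_self hρpos)
      · have hlow := ball_subset_le_infEdist hballs
        -- infDist is 1-Lipschitz: r₀ ≤ ρ + dist (γ s₀) (γ s)
        have hlip : r₀ ≤ ρ + dist (γ s₀) (γ s) := by
          have := Metric.infDist_le_infDist_add_dist (x := γ s₀) (y := γ s) (s := Ωᶜ)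
          linarith [this]
        have hdistγ : dist (γ s₀) (γ s) ≤ t - d := by
          have h1 : s₀ ∈ Set.Icc (0:ℝ) L := ⟨hs₀.1.le, hs₀.2⟩
          have h2 : s ∈ Set.Icc (0:ℝ) L := ⟨hs.1.le, hs.2⟩
          calc dist (γ s₀) (γ s) ≤ |s₀ - s| := hγd _ h1 _ h2
            _ = t - d := by rw [hsdef, abs_of_nonpos (by linarith)]; ring
        have hreal : t ≤ (8 * M + 1) * ρ := by
          have hcρ : c * ρ ≤ 4 * M * ρ := by nlinarith
          have hts : t - d = s - s₀ := by rw [hsdef]; ring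
          nlinarith [hs₀.1]
        calc ENNReal.ofReal t
            ≤ ENNReal.ofReal ((8 * M + 1) * ρ) := ENNReal.ofReal_le_ofReal hreal
          _ = ENNReal.ofReal (8 * M + 1) * ENNReal.ofReal ρ := ENNReal.ofReal_mul hM81
          _ ≤ ENNReal.ofReal (8 * M + 1) * EMetric.infEdist (γ s) Cᶜ :=
              mul_le_mul_right hlow _
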